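/- For an n×p matrix X, an integer 1 ≤ s ≤ p/2 and k₀ > 0, define K(s,k₀,X)⁻¹ as the minimum over all J₀ with |J₀| ≤ s and all nonzero v with ‖v_{J₀ᶜ}‖₁ ≤ k₀‖v_{J₀}‖₁ of ‖Xv‖₂/(√n ‖v_{J₀}‖₂), and define K(s,s,k₀,X)⁻¹ analogously with denominator √n ‖v_{J₀₁}‖₂, where J₀₁ = J₀ ∪ J₁ and J₁ indexes the s largest coordinates of v outside J₀. Then K(s,k₀,X) ≤ K(s,s,k₀,X) ≤ √2 · K(s,k₀,X). -/
import Mathlib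


open Finset

noncomputable def l1 {p : ℕ} (v : Fin p → ℝ) : ℝ := ∑ i, |v i|
noncomputable def l2 {p : ℕ} (v : Fin p → ℝ) : ℝ := Real.sqrt (∑ i, (v i) ^ 2)

def restr {p : ℕ} (T : Finset (Fin p)) (v : Fin p → ℝ) : Fin p → ℝ :=
  fun i => if i ∈ T then v i else 0

lemma l2_nonneg {p : ℕ} (v : Fin p → ℝ) : 0 ≤ l2 v := Real.sqrt_nonneg _

lemma restr_sum_sq {p : ℕ} (T : Finset (Fin p)) (v : Fin p → ℝ) :
    ∑ i, (restr T v i) ^ 2 = ∑ i ∈ T, v i ^ 2 := by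
  simp [restr, apply_ite (· ^ 2), Finset.sum_ite_mem]

lemma restr_sum_abs {p : ℕ} (T : Finset (Fin p)) (v : Fin p → ℝ) :
    l1 (restr T v) = ∑ i ∈ T, |v i| := by
  unfold l1
  simp [restr, apply_ite abs, Finset.sum_ite_mem]

lemma exists_top {α : Type*} [DecidableEq α] (w : α → ℝ) :
    ∀ (s : ℕ) (S : Finset α), s ≤ S.card →
    ∃ J, J ⊆ S ∧ J.card = s ∧ ∀ i ∈ J, ∀ j ∈ S, j ∉ J → w j ≤ w i := by
  intro s
  induction s with
  | zero => exact fun S _ => ⟨∅, by simp⟩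
  | succ s ih =>
    intro S hS
    have hne : S.Nonempty := Finset.card_pos.mp (by omega)
    obtain ⟨i0, hi0, hmax⟩ := S.exists_max_image w hne
    obtain ⟨J', hJ'sub, hJ'card, hJ'top⟩ := ih (S.erase i0)
      (by rw [Finset.card_erase_of_mem hi0]; omega)
    have hi0J' : i0 ∉ J' := fun h => (Finset.mem_erase.mp (hJ'sub h)).1 rfl
    refine ⟨insert i0 J', ?_, by rw [Finset.card_insert_of_notMem hi0J', hJ'card], ?_⟩
    · exact Finset.insert_subset hi0 (hJ'sub.trans (Finset.erase_subset _ _))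
    · intro i hi j hj hjJ
      rcases Finset.mem_insert.mp hi with rfl | hiJ'
      · exact hmax j hj
      · exact hJ'top i hiJ' j (Finset.mem_erase.mpr ⟨fun h => hjJ (h ▸ Finset.mem_insert_self _ _), hj⟩)
          (fun h => hjJ (Finset.mem_insert_of_mem h))

lemma sum_le_top {α : Type*} [DecidableEq α] (u : α → ℝ) (hu : ∀ i, 0 ≤ u i)
    (J T : Finset α) (hJT : T.card ≤ J.card)
    (htop : ∀ i ∈ J, ∀ j, j ∉ J → u j ≤ u i) :
    ∑ i ∈ T, u i ≤ ∑ i ∈ J, u i := by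
  have hsplit : ∀ (A B : Finset α), ∑ i ∈ A, u i = ∑ i ∈ A ∩ B, u i + ∑ i ∈ A \ B, u i :=
    fun A B => (Finset.sum_inter_add_sum_sdiff A B u).symm
  rw [hsplit T J, hsplit J T, Finset.inter_comm J T]
  have hcard : (T \ J).card ≤ (J \ T).card := by
    have h1 := Finset.card_inter_add_card_sdiff T J
    have h2 := Finset.card_inter_add_card_sdiff J T
    rw [Finset.inter_comm J T] at h2
    omega
  have hkey : ∑ i ∈ T \ J, u i ≤ ∑ i ∈ J \ T, u i := by
    rcases Finset.eq_empty_or_nonempty (T \ J) with h | h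
    · rw [h, Finset.sum_empty]
      exact Finset.sum_nonneg fun i _ => hu i
    · have hJT' : (J \ T).Nonempty := Finset.card_pos.mp
        (lt_of_lt_of_le (Finset.card_pos.mpr h) hcard)
      obtain ⟨i0, hi0, hmin⟩ := (J \ T).exists_min_image u hJT'
      have hi0J : i0 ∈ J := (Finset.mem_sdiff.mp hi0).1
      calc ∑ i ∈ T \ J, u i ≤ (T \ J).card • u i0 :=
            Finset.sum_le_card_nsmul _ _ _ fun j hj =>
              htop i0 hi0J j (Finset.mem_sdiff.mp hj).2
        _ ≤ (J \ T).card • u i0 := by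
            simp only [nsmul_eq_mul]
            exact mul_le_mul_of_nonneg_right (by exact_mod_cast hcard) (hu i0)
        _ ≤ ∑ i ∈ J \ T, u i := Finset.card_nsmul_le_sum _ _ _ fun j hj => hmin j hj
  linarith

/-- The set of ratios ‖Xv‖₂/(√n ‖v_{J₀}‖₂) over admissible pairs (J₀, v). -/
def ratios1 (n p s : ℕ) (k0 : ℝ) (X : Matrix (Fin n) (Fin p) ℝ) : Set ℝ :=
  { r | ∃ (J0 : Finset (Fin p)) (v : Fin p → ℝ), J0.card ≤ s ∧ v ≠ 0 ∧
      l1 (restr J0ᶜ v) ≤ k0 * l1 (restr J0 v) ∧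
      r = l2 (X.mulVec v) / (Real.sqrt n * l2 (restr J0 v)) }

/-- K(s,k₀,X) := (inf of the ratios)⁻¹. -/
noncomputable def Kre (n p s : ℕ) (k0 : ℝ) (X : Matrix (Fin n) (Fin p) ℝ) : ℝ :=
  (sInf (ratios1 n p s k0 X))⁻¹

/-- Ratios ‖Xv‖₂/(√n ‖v_{J₀₁}‖₂), where J₀₁ = J₀ ∪ J₁ and J₁ indexes the
s largest coordinates of v outside J₀. -/
def ratios2 (n p s : ℕ) (k0 : ℝ) (X : Matrix (Fin n) (Fin p) ℝ) : Set ℝ :=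
  { r | ∃ (J0 J1 : Finset (Fin p)) (v : Fin p → ℝ), J0.card ≤ s ∧ v ≠ 0 ∧
      l1 (restr J0ᶜ v) ≤ k0 * l1 (restr J0 v) ∧
      J1.card = s ∧ Disjoint J1 J0 ∧
      (∀ i ∈ J1, ∀ j, j ∉ J0 → j ∉ J1 → |v j| ≤ |v i|) ∧
      r = l2 (X.mulVec v) / (Real.sqrt n * l2 (restr (J0 ∪ J1) v)) }

/-- K(s,s,k₀,X) := (inf of those ratios)⁻¹. -/
noncomputable def Kre2 (n p s : ℕ) (k0 : ℝ) (X : Matrix (Fin n) (Fin p) ℝ) : ℝ :=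
  (sInf (ratios2 n p s k0 X))⁻¹

lemma ratios1_nonneg {n p s : ℕ} {k0 : ℝ} {X : Matrix (Fin n) (Fin p) ℝ} :
    ∀ r ∈ ratios1 n p s k0 X, 0 ≤ r := by
  rintro r ⟨J0, v, -, -, -, rfl⟩
  exact div_nonneg (l2_nonneg _) (mul_nonneg (Real.sqrt_nonneg _) (l2_nonneg _))

lemma ratios2_nonneg {n p s : ℕ} {k0 : ℝ} {X : Matrix (Fin n) (Fin p) ℝ} :
    ∀ r ∈ ratios2 n p s k0 X, 0 ≤ r := by
  rintro r ⟨J0, J1, v, -, -, -, -, -, -, rfl⟩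
  exact div_nonneg (l2_nonneg _) (mul_nonneg (Real.sqrt_nonneg _) (l2_nonneg _))

lemma step1 {n p s : ℕ} {k0 : ℝ} {X : Matrix (Fin n) (Fin p) ℝ}
    (hs : 1 ≤ s) (hsp : 2 * s ≤ p)
    (hRE : 0 < sInf (ratios1 n p s k0 X)) :
    ∀ r ∈ ratios1 n p s k0 X, ∃ r' ∈ ratios2 n p s k0 X, r' ≤ r := by
  have hbdd1 : BddBelow (ratios1 n p s k0 X) := ⟨0, fun r hr => ratios1_nonneg r hr⟩
  rintro r hr
  have hrpos : 0 < r := lt_of_lt_of_le hRE (csInf_le hbdd1 hr)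
  obtain ⟨J0, v, hJ0, hv, hcone, rfl⟩ := hr
  -- denominator positive
  have hden : 0 < Real.sqrt n * l2 (restr J0 v) := by
    rcases (mul_nonneg (Real.sqrt_nonneg (n:ℝ)) (l2_nonneg (restr J0 v))).lt_or_eq with h | h
    · exact h
    · exfalso; rw [← h, div_zero] at hrpos; exact lt_irrefl 0 hrpos
  -- construct J1
  have hcard : s ≤ J0ᶜ.card := by
    rw [Finset.card_compl, Fintype.card_fin]; omega
  obtain ⟨J1, hJ1sub, hJ1card, hJ1top⟩ := exists_top (fun j => |v j|) s J0ᶜ hcard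
  refine ⟨l2 (X.mulVec v) / (Real.sqrt n * l2 (restr (J0 ∪ J1) v)), ⟨J0, J1, v, hJ0, hv, hcone,
    hJ1card, Finset.disjoint_left.mpr fun i hi => Finset.mem_compl.mp (hJ1sub hi),
    fun i hi j hj0 hj1 => hJ1top i hi j (Finset.mem_compl.mpr hj0) hj1, rfl⟩, ?_⟩
  have hmono : l2 (restr J0 v) ≤ l2 (restr (J0 ∪ J1) v) := by
    apply Real.sqrt_le_sqrt
    rw [restr_sum_sq, restr_sum_sq]
    exact Finset.sum_le_sum_of_subset_of_nonneg Finset.subset_union_left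
      (fun i _ _ => sq_nonneg _)
  gcongr
  exact l2_nonneg _

lemma step2 {n p s : ℕ} {k0 : ℝ} {X : Matrix (Fin n) (Fin p) ℝ}
    (hn : 1 ≤ n) (hs : 1 ≤ s) (hsp : 2 * s ≤ p) (hk0 : 0 < k0) :
    ∀ r' ∈ ratios2 n p s k0 X, sInf (ratios1 n p s k0 X) ≤ Real.sqrt 2 * r' := by
  have hbdd1 : BddBelow (ratios1 n p s k0 X) := ⟨0, fun r hr => ratios1_nonneg r hr⟩
  rintro r' ⟨J0, J1, v, hJ0, hv, hcone, hJ1card, hdisj, htop, rfl⟩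
  -- top-s set over all indices
  obtain ⟨J, -, hJcard, hJtop⟩ := exists_top (fun j => |v j|) s (Finset.univ : Finset (Fin p))
    (by rw [Finset.card_univ, Fintype.card_fin]; omega)
  have hJtop' : ∀ i ∈ J, ∀ j, j ∉ J → |v j| ≤ |v i| :=
    fun i hi j hj => hJtop i hi j (Finset.mem_univ j) hj
  -- positivity of the union sum
  have hUpos : 0 < ∑ i ∈ J0 ∪ J1, v i ^ 2 := by
    rcases (Finset.sum_nonneg fun i (_ : i ∈ J0 ∪ J1) => sq_nonneg (v i)).lt_or_eq with h | h
    · exact h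
    · exfalso
      have hzero : ∀ i ∈ J0 ∪ J1, v i = 0 := by
        intro i hi
        have := (Finset.sum_eq_zero_iff_of_nonneg
          (fun i _ => sq_nonneg (v i))).mp h.symm i hi
        exact pow_eq_zero_iff two_ne_zero |>.mp this
      apply hv
      funext j
      by_cases hj : j ∈ J0 ∪ J1
      · exact hzero j hj
      · obtain ⟨i1, hi1⟩ := Finset.card_pos.mp (by omega : 0 < J1.card)
        have h1 : |v j| ≤ |v i1| := htop i1 hi1 j
          (fun h => hj (Finset.mem_union_left _ h)) (fun h => hj (Finset.mem_union_right _ h))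
        have h2 : v i1 = 0 := hzero i1 (Finset.mem_union_right _ hi1)
        rw [h2, abs_zero] at h1
        exact abs_nonpos_iff.mp h1
  -- domination for squares
  have hdomsq : ∀ (T : Finset (Fin p)), T.card ≤ s →
      ∑ i ∈ T, v i ^ 2 ≤ ∑ i ∈ J, v i ^ 2 := fun T hT =>
    sum_le_top (fun i => v i ^ 2) (fun i => sq_nonneg _) J T (hJcard ▸ hT)
      (fun i hi j hj => by
        have := hJtop' i hi j hj
        exact pow_le_pow_left₀ (abs_nonneg _) this 2 |>.trans_eq (by rw [sq_abs]) |>.trans_eq' (by rw [sq_abs]) )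
  have hUsplit : ∑ i ∈ J0 ∪ J1, v i ^ 2 = ∑ i ∈ J0, v i ^ 2 + ∑ i ∈ J1, v i ^ 2 := by
    rw [Finset.sum_union hdisj.symm]
  have hU2 : ∑ i ∈ J0 ∪ J1, v i ^ 2 ≤ 2 * ∑ i ∈ J, v i ^ 2 := by
    rw [hUsplit]; have h1 := hdomsq J0 hJ0; have h2 := hdomsq J1 (le_of_eq hJ1card)
    linarith
  have hJpos : 0 < ∑ i ∈ J, v i ^ 2 := by linarith
  -- cone condition for J
  have hdomabs : ∑ i ∈ J0, |v i| ≤ ∑ i ∈ J, |v i| :=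
    sum_le_top (fun i => |v i|) (fun i => abs_nonneg _) J J0 (hJcard ▸ hJ0) hJtop'
  have hconeJ : l1 (restr Jᶜ v) ≤ k0 * l1 (restr J v) := by
    rw [restr_sum_abs, restr_sum_abs]
    rw [restr_sum_abs, restr_sum_abs] at hcone
    have hs1 := Finset.sum_add_sum_compl J (fun i => |v i|)
    have hs0 := Finset.sum_add_sum_compl J0 (fun i => |v i|)
    nlinarith [hk0, hdomabs]
  -- membership of the new ratio
  have hmem : l2 (X.mulVec v) / (Real.sqrt n * l2 (restr J v)) ∈ ratios1 n p s k0 X :=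
    ⟨J, v, le_of_eq hJcard, hv, hconeJ, rfl⟩
  refine le_trans (csInf_le hbdd1 hmem) ?_
  -- final inequality
  have hsqrt2 : (0:ℝ) < Real.sqrt 2 := Real.sqrt_pos.mpr (by norm_num)
  have hn' : (0:ℝ) < Real.sqrt n := Real.sqrt_pos.mpr (by exact_mod_cast Nat.pos_of_ne_zero (by omega))
  have hdJ : 0 < l2 (restr J v) := by
    unfold l2; rw [restr_sum_sq]; exact Real.sqrt_pos.mpr hJpos
  have hdU : 0 < l2 (restr (J0 ∪ J1) v) := by
    unfold l2; rw [restr_sum_sq]; exact Real.sqrt_pos.mpr hUpos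
  have hkey : l2 (restr (J0 ∪ J1) v) ≤ Real.sqrt 2 * l2 (restr J v) := by
    unfold l2
    rw [restr_sum_sq, restr_sum_sq, ← Real.sqrt_mul (by norm_num : (0:ℝ) ≤ 2)]
    exact Real.sqrt_le_sqrt hU2
  have hN : 0 ≤ l2 (X.mulVec v) := l2_nonneg _
  rw [mul_div_assoc', div_le_div_iff₀ (by positivity) (by positivity)]
  calc l2 (X.mulVec v) * (Real.sqrt n * l2 (restr (J0 ∪ J1) v))
      ≤ l2 (X.mulVec v) * (Real.sqrt n * (Real.sqrt 2 * l2 (restr J v))) := by gcongr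
    _ = Real.sqrt 2 * l2 (X.mulVec v) * (Real.sqrt n * l2 (restr J v)) := by ring

/-- K(s,k₀,X) ≤ K(s,s,k₀,X) ≤ √2 · K(s,k₀,X). -/
theorem stmt4 (n p s : ℕ) (k0 : ℝ) (hn : 1 ≤ n) (hs : 1 ≤ s) (hsp : 2 * s ≤ p)
    (hk0 : 0 < k0) (X : Matrix (Fin n) (Fin p) ℝ)
    (hRE : 0 < sInf (ratios1 n p s k0 X)) :
    Kre n p s k0 X ≤ Kre2 n p s k0 X ∧
      Kre2 n p s k0 X ≤ Real.sqrt 2 * Kre n p s k0 X := by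
  have hsqrt2 : (0:ℝ) < Real.sqrt 2 := Real.sqrt_pos.mpr (by norm_num)
  have hbdd2 : BddBelow (ratios2 n p s k0 X) := ⟨0, fun r hr => ratios2_nonneg r hr⟩
  have hne1 : (ratios1 n p s k0 X).Nonempty := by
    by_contra h
    rw [Set.not_nonempty_iff_eq_empty] at h
    rw [h, Real.sInf_empty] at hRE
    exact lt_irrefl 0 hRE
  have hne2 : (ratios2 n p s k0 X).Nonempty := by
    obtain ⟨r, hr⟩ := hne1
    obtain ⟨r', hr', -⟩ := step1 hs hsp hRE r hr
    exact ⟨r', hr'⟩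
  have hBA : sInf (ratios2 n p s k0 X) ≤ sInf (ratios1 n p s k0 X) := by
    apply le_csInf hne1
    intro r hr
    obtain ⟨r', hr', hle⟩ := step1 hs hsp hRE r hr
    exact (csInf_le hbdd2 hr').trans hle
  have hAB2 : sInf (ratios1 n p s k0 X) / Real.sqrt 2 ≤ sInf (ratios2 n p s k0 X) := by
    apply le_csInf hne2
    intro r' hr'
    rw [div_le_iff₀ hsqrt2, mul_comm]
    exact step2 hn hs hsp hk0 r' hr'
  have hBpos : 0 < sInf (ratios2 n p s k0 X) :=
    lt_of_lt_of_le (by positivity) hAB2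
  constructor
  · exact inv_anti₀ hBpos hBA
  · have h1 : (sInf (ratios2 n p s k0 X))⁻¹ ≤ (sInf (ratios1 n p s k0 X) / Real.sqrt 2)⁻¹ :=
      inv_anti₀ (by positivity) hAB2
    unfold Kre2 Kre
    rw [inv_div] at h1
    rw [div_eq_mul_inv] at h1
    exact h1
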